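/- Let α be a set of reals > 1. Then: (4) if a ∈ P(α) and b ∈ T(α), then a + b ∈ T(α); (5) if a ∈ T(α) and b ∈ T(α), then (ab + 1)/(a + b) ∈ T(α). -/

import Mathlib

noncomputable section

/-- The homothetic copy of a plane figure `S` under `x ↦ r • x + v`. -/
def homothety (r : ℝ) (v : ℝ × ℝ) (S : Set (ℝ × ℝ)) : Set (ℝ × ℝ) :=
  (fun x : ℝ × ℝ => (r * x.1 + v.1, r * x.2 + v.2)) '' S

/-- `S` is tiled by homothetic copies of figures from the family `F`:
`S` is a union of finitely many homothetic copies of members of `F`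
whose interiors are pairwise disjoint. -/
def IsTiling (S : Set (ℝ × ℝ)) (F : Set (Set (ℝ × ℝ))) : Prop :=
  ∃ (n : ℕ) (r : Fin n → ℝ) (v : Fin n → ℝ × ℝ) (t : Fin n → Set (ℝ × ℝ)),
    (∀ i, t i ∈ F) ∧ (∀ i, 0 < r i) ∧
    S = ⋃ i, homothety (r i) (v i) (t i) ∧
    ∀ i j, i ≠ j →
      interior (homothety (r i) (v i) (t i)) ∩ interior (homothety (r j) (v j) (t j)) = ∅
/-- The standard trapezoid `t(a)`: unit height, horizontal bases `a+1` and `a-1`,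
base angles `45°`, midline `a`. -/
def stdTrap (a : ℝ) : Set (ℝ × ℝ) :=
  convexHull ℝ ({(0, 0), (a + 1, 0), (a, 1), (1, 1)} : Set (ℝ × ℝ))

/-- The standard parallelogram `p(a)`: unit height, horizontal bases of length `a`. -/
def stdPar (a : ℝ) : Set (ℝ × ℝ) :=
  convexHull ℝ ({(0, 0), (a, 0), (a + 1, 1), (1, 1)} : Set (ℝ × ℝ))
/-- `T(α)`: the set of `b > 1` such that `t(b)` is tiled by homothetic copies of the
trapezoids `t(a)`, `a ∈ α`. -/
def Tset (α : Set ℝ) : Set ℝ :=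
  {b | 1 < b ∧ IsTiling (stdTrap b) (stdTrap '' α)}

/-- `P(α)`: the set of `b > 0` such that `p(b)` is tiled by homothetic copies of the
trapezoids `t(a)`, `a ∈ α`. -/
def Pset (α : Set ℝ) : Set ℝ :=
  {b | 0 < b ∧ IsTiling (stdPar b) (stdTrap '' α)}

lemma stdTrap_eq (a : ℝ) (ha : 1 < a) :
    stdTrap a = {p : ℝ × ℝ | 0 ≤ p.2 ∧ p.2 ≤ 1 ∧ p.2 ≤ p.1 ∧ p.1 + p.2 ≤ a + 1} := by
  apply le_antisymm
  · apply convexHull_min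
    · rintro p hp
      simp only [Set.mem_insert_iff, Set.mem_singleton_iff] at hp
      rcases hp with rfl | rfl | rfl | rfl <;> refine ⟨?_, ?_, ?_, ?_⟩ <;>
        simp only [Set.mem_setOf_eq] <;> norm_num <;> nlinarith
    · intro x hx y hy s t hs ht hst
      simp only [Set.mem_setOf_eq] at *
      refine ⟨?_, ?_, ?_, ?_⟩ <;> simp only [Prod.fst_add, Prod.snd_add, Prod.smul_fst,
        Prod.smul_snd, smul_eq_mul] <;> nlinarith
  · rintro ⟨x, y⟩ ⟨h0, h1, h2, h3⟩
    simp only at h0 h1 h2 h3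
    have hd : (0:ℝ) < a + 1 - 2 * y := by nlinarith
    set t : ℝ := (x - y) / (a + 1 - 2 * y) with ht
    have ht0 : 0 ≤ t := div_nonneg (by linarith) (by linarith)
    have ht1 : t ≤ 1 := by rw [div_le_one hd]; linarith
    have hvc := convex_convexHull ℝ ({((0:ℝ), (0:ℝ)), (a + 1, 0), (a, 1), (1, 1)} : Set (ℝ × ℝ))
    have hm : ∀ q ∈ ({((0:ℝ), (0:ℝ)), (a + 1, 0), (a, 1), (1, 1)} : Set (ℝ × ℝ)),
        q ∈ stdTrap a := fun q hq => subset_convexHull ℝ _ hq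
    have hP : ((t * (a + 1), 0) : ℝ × ℝ) ∈ stdTrap a := by
      have := hvc (hm (0,0) (by simp)) (hm (a+1,0) (by simp)) (by linarith : (0:ℝ) ≤ 1 - t)
        ht0 (by ring)
      unfold stdTrap; simpa [Prod.ext_iff] using this
    have hQ : ((1 + t * (a - 1), 1) : ℝ × ℝ) ∈ stdTrap a := by
      have := hvc (hm (1,1) (by simp)) (hm (a,1) (by simp)) (by linarith : (0:ℝ) ≤ 1 - t)
        ht0 (by ring)
      have h' : (1 - t) • ((1:ℝ), (1:ℝ)) + t • ((a:ℝ), (1:ℝ)) = (1 + t * (a - 1), 1) := by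
        simp [Prod.ext_iff]; ring
      rwa [h'] at this
    have := hvc hP hQ (by linarith : (0:ℝ) ≤ 1 - y) h0 (by ring)
    have h' : (1 - y) • ((t * (a + 1), 0) : ℝ × ℝ) + y • ((1 + t * (a - 1), 1) : ℝ × ℝ)
        = (x, y) := by
      simp only [Prod.ext_iff, Prod.fst_add, Prod.snd_add, Prod.smul_fst, Prod.smul_snd,
        smul_eq_mul]
      constructor
      · have : t * (a + 1 - 2*y) = x - y := by rw [ht]; exact div_mul_cancel₀ _ hd.ne'
        nlinarith [this]
      · ring
    rwa [h'] at this

lemma stdPar_eq (a : ℝ) (ha : 0 < a) :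
    stdPar a = {p : ℝ × ℝ | 0 ≤ p.2 ∧ p.2 ≤ 1 ∧ p.2 ≤ p.1 ∧ p.1 ≤ p.2 + a} := by
  apply le_antisymm
  · apply convexHull_min
    · rintro p hp
      simp only [Set.mem_insert_iff, Set.mem_singleton_iff] at hp
      rcases hp with rfl | rfl | rfl | rfl <;> refine ⟨?_, ?_, ?_, ?_⟩ <;>
        simp only [Set.mem_setOf_eq] <;> norm_num <;> nlinarith
    · intro x hx y hy s t hs ht hst
      simp only [Set.mem_setOf_eq] at *
      refine ⟨?_, ?_, ?_, ?_⟩ <;> simp only [Prod.fst_add, Prod.snd_add, Prod.smul_fst,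
        Prod.smul_snd, smul_eq_mul] <;> nlinarith
  · rintro ⟨x, y⟩ ⟨h0, h1, h2, h3⟩
    simp only at h0 h1 h2 h3
    set t : ℝ := (x - y) / a with ht
    have ht0 : 0 ≤ t := div_nonneg (by linarith) (by linarith)
    have ht1 : t ≤ 1 := by rw [div_le_one ha]; linarith
    have hvc := convex_convexHull ℝ ({((0:ℝ), (0:ℝ)), (a, 0), (a + 1, 1), (1, 1)} : Set (ℝ × ℝ))
    have hm : ∀ q ∈ ({((0:ℝ), (0:ℝ)), (a, 0), (a + 1, 1), (1, 1)} : Set (ℝ × ℝ)),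
        q ∈ stdPar a := fun q hq => subset_convexHull ℝ _ hq
    have hP : ((t * a, 0) : ℝ × ℝ) ∈ stdPar a := by
      have := hvc (hm (0,0) (by simp)) (hm (a,0) (by simp)) (by linarith : (0:ℝ) ≤ 1 - t)
        ht0 (by ring)
      unfold stdPar; simpa [Prod.ext_iff] using this
    have hQ : ((1 + t * a, 1) : ℝ × ℝ) ∈ stdPar a := by
      have := hvc (hm (1,1) (by simp)) (hm (a+1,1) (by simp)) (by linarith : (0:ℝ) ≤ 1 - t)
        ht0 (by ring)
      have h' : (1 - t) • ((1:ℝ), (1:ℝ)) + t • ((a + 1:ℝ), (1:ℝ)) = (1 + t * a, 1) := by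
        simp [Prod.ext_iff]; ring
      rwa [h'] at this
    have := hvc hP hQ (by linarith : (0:ℝ) ≤ 1 - y) h0 (by ring)
    have h' : (1 - y) • ((t * a, 0) : ℝ × ℝ) + y • ((1 + t * a, 1) : ℝ × ℝ) = (x, y) := by
      simp only [Prod.ext_iff, Prod.fst_add, Prod.snd_add, Prod.smul_fst, Prod.smul_snd,
        smul_eq_mul]
      constructor
      · have : t * a = x - y := by rw [ht]; field_simp
        nlinarith [this]
      · ring
    rwa [h'] at this

lemma homothety_mem {r : ℝ} (hr : 0 < r) (v : ℝ × ℝ) (S : Set (ℝ × ℝ)) (p : ℝ × ℝ) :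
    p ∈ homothety r v S ↔ ((p.1 - v.1) / r, (p.2 - v.2) / r) ∈ S := by
  constructor
  · rintro ⟨q, hq, rfl⟩
    simpa [mul_comm, mul_div_assoc, mul_div_cancel_left₀, hr.ne'] using hq
  · intro h
    exact ⟨_, h, by field_simp; simp⟩

def homotheHomeo (r : ℝ) (hr : 0 < r) (v : ℝ × ℝ) : (ℝ × ℝ) ≃ₜ (ℝ × ℝ) where
  toFun p := (r * p.1 + v.1, r * p.2 + v.2)
  invFun p := ((p.1 - v.1) / r, (p.2 - v.2) / r)
  left_inv p := by
    have : r ≠ 0 := hr.ne'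
    simp [Prod.ext_iff]; constructor <;> field_simp <;> ring
  right_inv p := by
    have : r ≠ 0 := hr.ne'
    simp [Prod.ext_iff]; constructor <;> field_simp <;> ring
  continuous_toFun := by continuity
  continuous_invFun := by continuity

lemma interior_homothety {r : ℝ} (hr : 0 < r) (v : ℝ × ℝ) (S : Set (ℝ × ℝ)) :
    interior (homothety r v S) = homothety r v (interior S) := by
  have : homothety r v S = (homotheHomeo r hr v) '' S := rfl
  rw [this, ← (homotheHomeo r hr v).image_interior]; rfl

lemma homothety_comp (r s : ℝ) (v w : ℝ × ℝ) (S : Set (ℝ × ℝ)) :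
    homothety r v (homothety s w S) =
      homothety (r * s) (r * w.1 + v.1, r * w.2 + v.2) S := by
  unfold homothety
  rw [Set.image_image]
  have h : (fun x : ℝ × ℝ => (r * (s * x.1 + w.1) + v.1, r * (s * x.2 + w.2) + v.2)) =
      fun x : ℝ × ℝ => (r * s * x.1 + (r * w.1 + v.1), r * s * x.2 + (r * w.2 + v.2)) := by
    funext x; exact Prod.ext (by ring) (by ring)
  rw [h]

lemma homothety_inj {r : ℝ} (hr : 0 < r) (v : ℝ × ℝ) :
    Function.Injective (fun x : ℝ × ℝ => (r * x.1 + v.1, r * x.2 + v.2)) := by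
  intro p q h
  simp only [Prod.mk.injEq] at h
  have h1 : p.1 = q.1 := by
    have := h.1; nlinarith [hr]
  have h2 : p.2 = q.2 := by
    have := h.2; nlinarith [hr]
  exact Prod.ext h1 h2

lemma homothety_inter {r : ℝ} (hr : 0 < r) (v : ℝ × ℝ) (A B : Set (ℝ × ℝ)) :
    homothety r v A ∩ homothety r v B = homothety r v (A ∩ B) :=
  (Set.image_inter (homothety_inj hr v)).symm

lemma homothety_empty (r : ℝ) (v : ℝ × ℝ) : homothety r v ∅ = ∅ := Set.image_empty _

lemma IsTiling.homothety_img {S : Set (ℝ × ℝ)} {F : Set (Set (ℝ × ℝ))}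
    (h : IsTiling S F) {r : ℝ} (hr : 0 < r) (v : ℝ × ℝ) :
    IsTiling (homothety r v S) F := by
  obtain ⟨n, rr, vv, t, hmem, hpos, hS, hdisj⟩ := h
  refine ⟨n, fun i => r * rr i, fun i => (r * (vv i).1 + v.1, r * (vv i).2 + v.2), t,
    hmem, fun i => mul_pos hr (hpos i), ?_, ?_⟩
  · rw [hS]
    unfold homothety
    rw [Set.image_iUnion]
    refine Set.iUnion_congr fun i => ?_
    exact homothety_comp r (rr i) v (vv i) (t i)
  · intro i j hij
    rw [← homothety_comp, ← homothety_comp, interior_homothety hr, interior_homothety hr,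
      homothety_inter hr, hdisj i j hij, homothety_empty]

lemma IsTiling.union {S₁ S₂ : Set (ℝ × ℝ)} {F : Set (Set (ℝ × ℝ))}
    (h1 : IsTiling S₁ F) (h2 : IsTiling S₂ F)
    (hd : interior S₁ ∩ interior S₂ = ∅) : IsTiling (S₁ ∪ S₂) F := by
  obtain ⟨n, r1, v1, t1, hmem1, hpos1, hS1, hdisj1⟩ := h1
  obtain ⟨m, r2, v2, t2, hmem2, hpos2, hS2, hdisj2⟩ := h2
  refine ⟨n + m, Fin.append r1 r2, Fin.append v1 v2, Fin.append t1 t2, ?_, ?_, ?_, ?_⟩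
  · intro i
    refine Fin.addCases (fun i => ?_) (fun i => ?_) i <;>
      simp [Fin.append_left, Fin.append_right, hmem1, hmem2]
  · intro i
    refine Fin.addCases (fun i => ?_) (fun i => ?_) i <;>
      simp [Fin.append_left, Fin.append_right, hpos1, hpos2]
  · ext p
    simp only [Set.mem_union, Set.mem_iUnion, hS1, hS2]
    constructor
    · rintro (⟨i, hi⟩ | ⟨i, hi⟩)
      · exact ⟨Fin.castAdd m i, by simpa [Fin.append_left] using hi⟩
      · exact ⟨Fin.natAdd n i, by simpa [Fin.append_right] using hi⟩
    · rintro ⟨i, hi⟩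
      refine Fin.addCases (motive := fun i => p ∈ homothety (Fin.append r1 r2 i)
        (Fin.append v1 v2 i) (Fin.append t1 t2 i) → (∃ j, p ∈ homothety (r1 j) (v1 j) (t1 j))
          ∨ ∃ j, p ∈ homothety (r2 j) (v2 j) (t2 j)) (fun i h => ?_) (fun i h => ?_) i hi
      · exact Or.inl ⟨i, by simpa [Fin.append_left] using h⟩
      · exact Or.inr ⟨i, by simpa [Fin.append_right] using h⟩
  · have key1 : ∀ i, homothety (r1 i) (v1 i) (t1 i) ⊆ S₁ := fun i =>
      hS1 ▸ Set.subset_iUnion (fun k => homothety (r1 k) (v1 k) (t1 k)) i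
    have key2 : ∀ i, homothety (r2 i) (v2 i) (t2 i) ⊆ S₂ := fun i =>
      hS2 ▸ Set.subset_iUnion (fun k => homothety (r2 k) (v2 k) (t2 k)) i
    have int1 : ∀ i, interior (homothety (r1 i) (v1 i) (t1 i)) ⊆ interior S₁ :=
      fun i => interior_mono (key1 i)
    have int2 : ∀ i, interior (homothety (r2 i) (v2 i) (t2 i)) ⊆ interior S₂ :=
      fun i => interior_mono (key2 i)
    have fin_cases' : ∀ k : Fin (n + m),
        (∃ i : Fin n, k = Fin.castAdd m i) ∨ ∃ i : Fin m, k = Fin.natAdd n i := by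
      intro k
      rcases lt_or_ge (k : ℕ) n with h | h
      · exact Or.inl ⟨⟨k, h⟩, by ext; simp⟩
      · exact Or.inr ⟨⟨(k : ℕ) - n, by omega⟩, by ext; simp; omega⟩
    intro i j hij
    rcases fin_cases' i with ⟨i', rfl⟩ | ⟨i', rfl⟩ <;>
      rcases fin_cases' j with ⟨j', rfl⟩ | ⟨j', rfl⟩ <;>
      simp only [Fin.append_left, Fin.append_right]
    · have : i' ≠ j' := fun h => hij (by rw [h])
      exact hdisj1 i' j' this
    · exact Set.eq_empty_of_subset_empty
        (hd ▸ Set.inter_subset_inter (int1 i') (int2 j'))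
    · exact Set.eq_empty_of_subset_empty
        ((Set.inter_comm _ _).trans_subset (hd ▸ Set.inter_subset_inter (int1 j') (int2 i')))
    · have : i' ≠ j' := fun h => hij (by rw [h])
      exact hdisj2 i' j' this

lemma interior_sub_lt {S : Set (ℝ × ℝ)} {c : ℝ} (h : ∀ p ∈ S, p.1 - p.2 ≤ c) :
    ∀ p ∈ interior S, p.1 - p.2 < c := by
  intro p hp
  obtain ⟨ε, hε, hball⟩ := Metric.isOpen_iff.1 isOpen_interior p hp
  have hq : ((p.1 + ε / 2, p.2) : ℝ × ℝ) ∈ S := by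
    apply interior_subset
    apply hball
    rw [Metric.mem_ball, Prod.dist_eq]
    simp [Real.dist_eq, abs_of_nonneg hε.le]
    linarith
  have := h _ hq
  simp at this
  linarith

lemma interior_sub_gt {S : Set (ℝ × ℝ)} {c : ℝ} (h : ∀ p ∈ S, c ≤ p.1 - p.2) :
    ∀ p ∈ interior S, c < p.1 - p.2 := by
  intro p hp
  obtain ⟨ε, hε, hball⟩ := Metric.isOpen_iff.1 isOpen_interior p hp
  have hq : ((p.1 - ε / 2, p.2) : ℝ × ℝ) ∈ S := by
    apply interior_subset
    apply hball
    rw [Metric.mem_ball, Prod.dist_eq]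
    simp [Real.dist_eq, abs_of_nonneg hε.le]
    linarith
  have := h _ hq
  simp at this
  linarith

lemma interior_snd_lt {S : Set (ℝ × ℝ)} {c : ℝ} (h : ∀ p ∈ S, p.2 ≤ c) :
    ∀ p ∈ interior S, p.2 < c := by
  intro p hp
  obtain ⟨ε, hε, hball⟩ := Metric.isOpen_iff.1 isOpen_interior p hp
  have hq : ((p.1, p.2 + ε / 2) : ℝ × ℝ) ∈ S := by
    apply interior_subset
    apply hball
    rw [Metric.mem_ball, Prod.dist_eq]
    simp [Real.dist_eq, abs_of_nonneg hε.le]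
    linarith
  have := h _ hq
  simp at this
  linarith

lemma interior_snd_gt {S : Set (ℝ × ℝ)} {c : ℝ} (h : ∀ p ∈ S, c ≤ p.2) :
    ∀ p ∈ interior S, c < p.2 := by
  intro p hp
  obtain ⟨ε, hε, hball⟩ := Metric.isOpen_iff.1 isOpen_interior p hp
  have hq : ((p.1, p.2 - ε / 2) : ℝ × ℝ) ∈ S := by
    apply interior_subset
    apply hball
    rw [Metric.mem_ball, Prod.dist_eq]
    simp [Real.dist_eq, abs_of_nonneg hε.le]
    linarith
  have := h _ hq
  simp at this
  linarith

lemma homothety_stdTrap {r : ℝ} (hr : 0 < r) (v : ℝ × ℝ) {a : ℝ} (ha : 1 < a) :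
    homothety r v (stdTrap a) = {p : ℝ × ℝ | v.2 ≤ p.2 ∧ p.2 ≤ v.2 + r ∧
      p.2 - v.2 ≤ p.1 - v.1 ∧ (p.1 - v.1) + (p.2 - v.2) ≤ r * (a + 1)} := by
  rw [stdTrap_eq a ha]
  ext p
  constructor
  · rintro ⟨⟨x, y⟩, ⟨h0, h1, h2, h3⟩, rfl⟩
    simp only [Set.mem_setOf_eq] at *
    refine ⟨by nlinarith, by nlinarith, by nlinarith, by nlinarith⟩
  · rintro ⟨h1, h2, h3, h4⟩
    refine ⟨((p.1 - v.1) / r, (p.2 - v.2) / r), ⟨?_, ?_, ?_, ?_⟩, ?_⟩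
    · exact div_nonneg (by linarith) hr.le
    · rw [div_le_one hr]; linarith
    · exact (div_le_div_iff_of_pos_right hr).2 (by linarith)
    · rw [← add_div, div_le_iff₀ hr]; linarith
    · have : r ≠ 0 := hr.ne'
      exact Prod.ext (by field_simp; ring) (by field_simp; ring)

lemma decomp4 {a b : ℝ} (ha : 0 < a) (hb : 1 < b) :
    stdTrap (a + b) = stdPar a ∪ homothety 1 (a, 0) (stdTrap b) := by
  rw [stdTrap_eq (a + b) (by linarith), stdPar_eq a ha, homothety_stdTrap one_pos (a, 0) hb]
  ext ⟨x, y⟩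
  simp only [Set.mem_setOf_eq, Set.mem_union]
  constructor
  · rintro ⟨h0, h1, h2, h3⟩
    rcases le_total x (y + a) with h | h
    · exact Or.inl ⟨h0, h1, h2, h⟩
    · exact Or.inr ⟨by norm_num; linarith, by norm_num; linarith, by norm_num; linarith,
        by norm_num; linarith⟩
  · rintro (⟨h0, h1, h2, h3⟩ | ⟨h0, h1, h2, h3⟩)
    · exact ⟨h0, h1, h2, by linarith⟩
    · norm_num at h0 h1 h2 h3
      exact ⟨h0, by linarith, by linarith, by linarith⟩

lemma disj4 {a b : ℝ} (ha : 0 < a) (hb : 1 < b) :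
    interior (stdPar a) ∩ interior (homothety 1 (a, 0) (stdTrap b)) = ∅ := by
  have hL : ∀ p ∈ stdPar a, p.1 - p.2 ≤ a := by
    rw [stdPar_eq a ha]; rintro p ⟨_, _, _, h⟩; linarith
  have hR : ∀ p ∈ homothety 1 (a, 0) (stdTrap b), a ≤ p.1 - p.2 := by
    rw [homothety_stdTrap one_pos (a, 0) hb]
    rintro p ⟨_, _, h, _⟩; norm_num at h; linarith
  apply Set.eq_empty_iff_forall_notMem.2
  rintro p ⟨hp1, hp2⟩
  have := interior_sub_lt hL p hp1
  have := interior_sub_gt hR p hp2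
  linarith

lemma decomp5 {a b : ℝ} (ha : 1 < a) (hb : 1 < b) :
    stdTrap ((a * b + 1) / (a + b)) = homothety ((b + 1) / (a + b)) (0, 0) (stdTrap a) ∪
      homothety (1 - (b + 1) / (a + b)) ((b + 1) / (a + b), (b + 1) / (a + b)) (stdTrap b) := by
  have hab : (0 : ℝ) < a + b := by linarith
  set c : ℝ := (a * b + 1) / (a + b) with hc
  set h : ℝ := (b + 1) / (a + b) with hh
  have hc1 : 1 < c := by rw [hc, lt_div_iff₀ hab]; nlinarith
  have hh0 : 0 < h := div_pos (by linarith) hab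
  have hh1 : h < 1 := by rw [hh, div_lt_one hab]; linarith
  have hk0 : 0 < 1 - h := by linarith
  have key1 : h * (a + 1) = c + 1 := by rw [hh, hc]; field_simp; ring
  have key2 : 2 * h + (1 - h) * (b + 1) = c + 1 := by rw [hh, hc]; field_simp; ring
  rw [stdTrap_eq c hc1, homothety_stdTrap hh0 _ ha, homothety_stdTrap hk0 _ hb]
  ext ⟨x, y⟩
  simp only [Set.mem_setOf_eq, Set.mem_union]
  constructor
  · rintro ⟨h0, h1, h2, h3⟩
    rcases le_total y h with hy | hy
    · exact Or.inl ⟨h0, by linarith, by norm_num; linarith, by norm_num; linarith⟩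
    · exact Or.inr ⟨hy, by linarith, by linarith, by linarith⟩
  · rintro (⟨h0, h1, h2, h3⟩ | ⟨h0, h1, h2, h3⟩)
    · norm_num at h0 h1 h2 h3
      exact ⟨h0, by linarith, by linarith, by linarith⟩
    · exact ⟨by linarith, by linarith, by linarith, by linarith⟩

lemma disj5 {a b : ℝ} (ha : 1 < a) (hb : 1 < b) :
    interior (homothety ((b + 1) / (a + b)) (0, 0) (stdTrap a)) ∩
      interior (homothety (1 - (b + 1) / (a + b))
        ((b + 1) / (a + b), (b + 1) / (a + b)) (stdTrap b)) = ∅ := by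
  have hab : (0 : ℝ) < a + b := by linarith
  set h : ℝ := (b + 1) / (a + b) with hh
  have hh0 : 0 < h := div_pos (by linarith) hab
  have hh1 : h < 1 := by rw [hh, div_lt_one hab]; linarith
  have hL : ∀ p ∈ homothety h (0, 0) (stdTrap a), p.2 ≤ h := by
    rw [homothety_stdTrap hh0 _ ha]
    rintro p ⟨_, h2, _, _⟩; norm_num at h2; linarith
  have hR : ∀ p ∈ homothety (1 - h) (h, h) (stdTrap b), h ≤ p.2 := by
    rw [homothety_stdTrap (by linarith : (0:ℝ) < 1 - h) _ hb]
    rintro p ⟨h1, _, _, _⟩; exact h1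
  apply Set.eq_empty_iff_forall_notMem.2
  rintro p ⟨hp1, hp2⟩
  have := interior_snd_lt hL p hp1
  have := interior_snd_gt hR p hp2
  linarith

/-- **Properties 4) and 5) of the sets `T(α)` and `P(α)`.** -/
theorem statement9 (α : Set ℝ) (hα : ∀ x ∈ α, 1 < x) :
    (∀ a ∈ Pset α, ∀ b ∈ Tset α, a + b ∈ Tset α) ∧
    (∀ a ∈ Tset α, ∀ b ∈ Tset α, (a * b + 1) / (a + b) ∈ Tset α) := by
  constructor
  · rintro a ⟨ha, hta⟩ b ⟨hb, htb⟩
    refine ⟨by linarith, ?_⟩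
    rw [decomp4 ha hb]
    exact hta.union (htb.homothety_img one_pos (a, 0)) (disj4 ha hb)
  · rintro a ⟨ha, hta⟩ b ⟨hb, htb⟩
    have hab : (0:ℝ) < a + b := by linarith
    have hc1 : 1 < (a * b + 1) / (a + b) := by rw [lt_div_iff₀ hab]; nlinarith
    refine ⟨hc1, ?_⟩
    rw [decomp5 ha hb]
    have hh1 : (b + 1) / (a + b) < 1 := by rw [div_lt_one hab]; linarith
    exact (hta.homothety_img (div_pos (by linarith) hab) _).union
      (htb.homothety_img (by linarith) _) (disj5 ha hb)
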